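/- Let X and Y be real normed spaces, and equip X × Y with the max norm. A point (x,y) of the unit sphere of X × Y is a smooth point if and only if either (x is a smooth point of the unit sphere of X and ‖y‖ < 1) or (‖x‖ < 1 and y is a smooth point of the unit sphere of Y). That is, sm S_{X×Y} = (sm S_X × (B_Y \ S_Y)) ∪ ((B_X \ S_X) × sm S_Y). -/

import Mathlib

open ContinuousLinearMap

section Helpers
variable {X Y : Type*} [NormedAddCommGroup X] [NormedSpace ℝ X]
  [NormedAddCommGroup Y] [NormedSpace ℝ Y]

private lemma normCompFstLe (g : X →L[ℝ] ℝ) : ‖g.comp (fst ℝ X Y)‖ ≤ ‖g‖ := by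
  apply opNorm_le_bound _ (norm_nonneg g)
  intro p
  simpa using (g.le_opNorm p.1).trans
    (mul_le_mul_of_nonneg_left (norm_fst_le p) (norm_nonneg g))

private lemma normCompSndLe (h : Y →L[ℝ] ℝ) : ‖h.comp (snd ℝ X Y)‖ ≤ ‖h‖ := by
  apply opNorm_le_bound _ (norm_nonneg h)
  intro p
  simpa using (h.le_opNorm p.2).trans
    (mul_le_mul_of_nonneg_left (norm_snd_le p) (norm_nonneg h))

private lemma normCompInlLe (f : X × Y →L[ℝ] ℝ) : ‖f.comp (inl ℝ X Y)‖ ≤ ‖f‖ := by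
  apply opNorm_le_bound _ (norm_nonneg f)
  intro u
  simpa [Prod.norm_def] using f.le_opNorm (u, (0:Y))

private lemma normCompInrLe (f : X × Y →L[ℝ] ℝ) : ‖f.comp (inr ℝ X Y)‖ ≤ ‖f‖ := by
  apply opNorm_le_bound _ (norm_nonneg f)
  intro v
  simpa [Prod.norm_def] using f.le_opNorm ((0:X), v)

/-- A functional bounded above by `c` on the unit ball has norm at most `c`. -/
private lemma opNormLeOfBall (h : X →L[ℝ] ℝ) (c : ℝ)
    (hc : ∀ v : X, ‖v‖ ≤ 1 → h v ≤ c) : ‖h‖ ≤ c := by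
  have key : ∀ v : X, h v ≤ c * ‖v‖ := by
    intro v
    rcases eq_or_ne v 0 with rfl | hv
    · have h0 := hc 0 (by simp); simpa using h0
    · have hv' : (0:ℝ) < ‖v‖ := norm_pos_iff.mpr hv
      have h1 : h (‖v‖⁻¹ • v) ≤ c := hc _ (by
        simp [norm_smul, abs_of_nonneg (inv_nonneg.mpr hv'.le),
          inv_mul_cancel₀ hv'.ne'])
      rw [map_smul, smul_eq_mul] at h1
      have h2 := mul_le_mul_of_nonneg_left h1 hv'.le
      calc h v = ‖v‖ * (‖v‖⁻¹ * h v) := by field_simp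
        _ ≤ ‖v‖ * c := h2
        _ = c * ‖v‖ := mul_comm _ _
  have hc0 : 0 ≤ c := by simpa using hc 0 (by simp)
  apply opNorm_le_bound _ hc0
  intro v
  rw [Real.norm_eq_abs, abs_le]
  constructor
  · have := key (-v); simp only [map_neg, norm_neg] at this; linarith
  · exact key v

/-- If a norm-one functional on `X × Y` attains `1` at `(x, y)` with `‖x‖ ≤ 1`
and `‖y‖ < 1`, then its `Y`-part vanishes. -/
private lemma inrPartZero (f : X × Y →L[ℝ] ℝ) (x : X) (y : Y)
    (hf : ‖f‖ = 1) (hfxy : f (x, y) = 1) (hx : ‖x‖ ≤ 1) (hy : ‖y‖ < 1) :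
    f.comp (inr ℝ X Y) = 0 := by
  set h : Y →L[ℝ] ℝ := f.comp (inr ℝ X Y) with hh
  have hval : ∀ v : Y, ‖v‖ ≤ 1 → h v ≤ h y := by
    intro v hv
    have hsplit : ((x, v) : X × Y) = (x, y) + ((0 : X), v) - ((0 : X), y) := by
      simp [Prod.mk_add_mk, Prod.mk_sub_mk]
    have hfv : f (x, v) = 1 + (h v - h y) := by
      rw [hsplit, map_sub, map_add, hfxy]
      simp [hh]
      ring
    have hle : f (x, v) ≤ 1 := by
      have h1 : f (x, v) ≤ ‖f (x, v)‖ := le_abs_self _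
      have h2 := f.le_opNorm (x, v)
      rw [hf, one_mul] at h2
      have h3 : ‖((x, v) : X × Y)‖ ≤ 1 := by
        rw [Prod.norm_def]; exact max_le hx hv
      linarith
    linarith [hfv ▸ hle]
  have h1 : ‖h‖ ≤ h y := opNormLeOfBall h (h y) hval
  have h2 : h y ≤ ‖h‖ * ‖y‖ := (le_abs_self _).trans (h.le_opNorm y)
  have h3 : 0 ≤ ‖h‖ := norm_nonneg h
  have : ‖h‖ ≤ 0 := by nlinarith
  exact norm_le_zero_iff.mp this

/-- Symmetric version: if `‖y‖ ≤ 1` and `‖x‖ < 1`, the `X`-part vanishes. -/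
private lemma inlPartZero (f : X × Y →L[ℝ] ℝ) (x : X) (y : Y)
    (hf : ‖f‖ = 1) (hfxy : f (x, y) = 1) (hy : ‖y‖ ≤ 1) (hx : ‖x‖ < 1) :
    f.comp (inl ℝ X Y) = 0 := by
  set g : X →L[ℝ] ℝ := f.comp (inl ℝ X Y) with hg
  have hval : ∀ u : X, ‖u‖ ≤ 1 → g u ≤ g x := by
    intro u hu
    have hsplit : ((u, y) : X × Y) = (x, y) + (u, (0 : Y)) - (x, (0 : Y)) := by
      simp [Prod.mk_add_mk, Prod.mk_sub_mk]
    have hfv : f (u, y) = 1 + (g u - g x) := by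
      rw [hsplit, map_sub, map_add, hfxy]
      simp [hg]
      ring
    have hle : f (u, y) ≤ 1 := by
      have h1 : f (u, y) ≤ ‖f (u, y)‖ := le_abs_self _
      have h2 := f.le_opNorm (u, y)
      rw [hf, one_mul] at h2
      have h3 : ‖((u, y) : X × Y)‖ ≤ 1 := by
        rw [Prod.norm_def]; exact max_le hu hy
      linarith
    linarith [hfv ▸ hle]
  have h1 : ‖g‖ ≤ g x := opNormLeOfBall g (g x) hval
  have h2 : g x ≤ ‖g‖ * ‖x‖ := (le_abs_self _).trans (g.le_opNorm x)
  have h3 : 0 ≤ ‖g‖ := norm_nonneg g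
  have : ‖g‖ ≤ 0 := by nlinarith
  exact norm_le_zero_iff.mp this

/-- Norm of `g ∘ fst` is one when `g` supports `x` and `‖(x,y)‖ ≤ 1`. -/
private lemma normCompFstEq (g : X →L[ℝ] ℝ) (x : X) (y : Y)
    (hg : ‖g‖ = 1) (hgx : g x = 1) (hn : ‖((x, y) : X × Y)‖ ≤ 1) :
    ‖g.comp (fst ℝ X Y)‖ = 1 := by
  refine le_antisymm (hg ▸ normCompFstLe g) ?_
  have := (g.comp (fst ℝ X Y)).unit_le_opNorm (x, y) hn
  simpa [hgx] using this

private lemma normCompSndEq (h : Y →L[ℝ] ℝ) (x : X) (y : Y)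
    (hg : ‖h‖ = 1) (hgy : h y = 1) (hn : ‖((x, y) : X × Y)‖ ≤ 1) :
    ‖h.comp (snd ℝ X Y)‖ = 1 := by
  refine le_antisymm (hg ▸ normCompSndLe h) ?_
  have := (h.comp (snd ℝ X Y)).unit_le_opNorm (x, y) hn
  simpa [hgy] using this

end Helpers

/-- `x` is a smooth point of the unit sphere: `‖x‖ = 1` and there is a unique
norm-one supporting functional at `x`. -/
def SmoothPt {X : Type*} [NormedAddCommGroup X] [NormedSpace ℝ X] (x : X) : Prop :=
  ‖x‖ = 1 ∧ ∃! f : X →L[ℝ] ℝ, ‖f‖ = 1 ∧ f x = 1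

/-- `sm S_{X×Y} = (sm S_X × int B_Y) ∪ (int B_X × sm S_Y)` for the max-norm product. -/
theorem statement6 {X Y : Type*} [NormedAddCommGroup X] [NormedSpace ℝ X]
    [NormedAddCommGroup Y] [NormedSpace ℝ Y] (x : X) (y : Y) :
    SmoothPt ((x, y) : X × Y) ↔
      (SmoothPt x ∧ ‖y‖ < 1) ∨ (‖x‖ < 1 ∧ SmoothPt y) := by
  constructor
  · rintro ⟨hn, f, ⟨hf1, hfxy⟩, huniq⟩
    have hn' : max ‖x‖ ‖y‖ = 1 := by rwa [Prod.norm_def] at hn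
    have hnle : ‖((x, y) : X × Y)‖ ≤ 1 := le_of_eq hn
    have hx1 : ‖x‖ ≤ 1 := (le_max_left ‖x‖ ‖y‖).trans hn'.le
    have hy1 : ‖y‖ ≤ 1 := (le_max_right ‖x‖ ‖y‖).trans hn'.le
    by_cases hy : ‖y‖ < 1
    · have hx : ‖x‖ = 1 := by
        rcases max_choice ‖x‖ ‖y‖ with h | h
        · rw [h] at hn'; exact hn'
        · rw [h] at hn'; exact absurd hn' hy.ne
      left
      refine ⟨⟨hx, ?_⟩, hy⟩
      obtain ⟨g₀, hg₀1, hg₀x⟩ := exists_dual_vector ℝ x (by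
        intro h0; rw [h0] at hx; norm_num at hx)
      have hg₀x' : g₀ x = 1 := by simpa [hx] using hg₀x
      refine ⟨g₀, ⟨hg₀1, hg₀x'⟩, ?_⟩
      intro g ⟨hg1, hgx⟩
      have e1 : g.comp (fst ℝ X Y) = f :=
        huniq _ ⟨normCompFstEq g x y hg1 hgx hnle, by simpa using hgx⟩
      have e2 : g₀.comp (fst ℝ X Y) = f :=
        huniq _ ⟨normCompFstEq g₀ x y hg₀1 hg₀x' hnle, by simpa using hg₀x'⟩
      have e3 := e1.trans e2.symm
      ext u
      have := congrArg (fun F : X × Y →L[ℝ] ℝ => F (u, (0:Y))) e3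
      simpa using this
    · push_neg at hy
      have hyy : ‖y‖ = 1 := le_antisymm hy1 hy
      by_cases hx : ‖x‖ < 1
      · right
        refine ⟨hx, hyy, ?_⟩
        obtain ⟨h₀, hh₀1, hh₀y⟩ := exists_dual_vector ℝ y (by
          intro h0; rw [h0] at hyy; norm_num at hyy)
        have hh₀y' : h₀ y = 1 := by simpa [hyy] using hh₀y
        refine ⟨h₀, ⟨hh₀1, hh₀y'⟩, ?_⟩
        intro h ⟨hh1, hhy⟩
        have e1 : h.comp (snd ℝ X Y) = f :=
          huniq _ ⟨normCompSndEq h x y hh1 hhy hnle, by simpa using hhy⟩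
        have e2 : h₀.comp (snd ℝ X Y) = f :=
          huniq _ ⟨normCompSndEq h₀ x y hh₀1 hh₀y' hnle, by simpa using hh₀y'⟩
        have e3 := e1.trans e2.symm
        ext v
        have := congrArg (fun F : X × Y →L[ℝ] ℝ => F ((0:X), v)) e3
        simpa using this
      · exfalso
        push_neg at hx
        have hxx : ‖x‖ = 1 := le_antisymm hx1 hx
        obtain ⟨g₀, hg₀1, hg₀x⟩ := exists_dual_vector ℝ x (by
          intro h0; rw [h0] at hxx; norm_num at hxx)
        have hg₀x' : g₀ x = 1 := by simpa [hxx] using hg₀x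
        obtain ⟨h₀, hh₀1, hh₀y⟩ := exists_dual_vector ℝ y (by
          intro h0; rw [h0] at hyy; norm_num at hyy)
        have hh₀y' : h₀ y = 1 := by simpa [hyy] using hh₀y
        have e1 : g₀.comp (fst ℝ X Y) = f :=
          huniq _ ⟨normCompFstEq g₀ x y hg₀1 hg₀x' hnle, by simpa using hg₀x'⟩
        have e2 : h₀.comp (snd ℝ X Y) = f :=
          huniq _ ⟨normCompSndEq h₀ x y hh₀1 hh₀y' hnle, by simpa using hh₀y'⟩
        have := congrArg (fun F : X × Y →L[ℝ] ℝ => F (x, (0:Y))) (e1.trans e2.symm)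
        simp [hg₀x'] at this
  · rintro (⟨⟨hx, g₀, ⟨hg₀1, hg₀x⟩, hguniq⟩, hy⟩ | ⟨hx, ⟨hy, h₀, ⟨hh₀1, hh₀y⟩, hhuniq⟩⟩)
    · have hn : ‖((x, y) : X × Y)‖ = 1 := by
        rw [Prod.norm_def, hx]; exact max_eq_left hy.le
      refine ⟨hn, g₀.comp (fst ℝ X Y),
        ⟨normCompFstEq g₀ x y hg₀1 hg₀x hn.le, by simpa using hg₀x⟩, ?_⟩
      intro f ⟨hf1, hfxy⟩
      have hz : f.comp (inr ℝ X Y) = 0 := inrPartZero f x y hf1 hfxy hx.le hy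
      set g : X →L[ℝ] ℝ := f.comp (inl ℝ X Y) with hg
      have h0 : ∀ v : Y, f ((0:X), v) = 0 := by
        intro v
        have := congrArg (fun F : Y →L[ℝ] ℝ => F v) hz
        simpa using this
      have hgx : g x = 1 := by
        have hsplit : ((x, (0:Y)) : X × Y) = (x, y) - ((0:X), y) := by
          simp [Prod.mk_sub_mk]
        have : g x = f (x, y) - f ((0:X), y) := by
          rw [hg]; simp only [comp_apply, inl_apply]
          rw [hsplit, map_sub]
        rw [this, hfxy, h0 y, sub_zero]
      have hgn : ‖g‖ = 1 := by
        refine le_antisymm (hf1 ▸ normCompInlLe f) ?_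
        have := g.unit_le_opNorm x hx.le
        simpa [hgx] using this
      have hgg : g = g₀ := hguniq g ⟨hgn, hgx⟩
      refine ContinuousLinearMap.ext fun p => ?_
      have hsplit : (p : X × Y) = (p.1, (0:Y)) + ((0:X), p.2) := by
        simp [Prod.mk_add_mk]
      have hfp : f p = g p.1 := by
        conv_lhs => rw [hsplit]
        rw [map_add, h0 p.2, add_zero]
        simp [hg]
      simp [hfp, hgg]
    · have hn : ‖((x, y) : X × Y)‖ = 1 := by
        rw [Prod.norm_def, hy]; exact max_eq_right hx.le
      refine ⟨hn, h₀.comp (snd ℝ X Y),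
        ⟨normCompSndEq h₀ x y hh₀1 hh₀y hn.le, by simpa using hh₀y⟩, ?_⟩
      intro f ⟨hf1, hfxy⟩
      have hz : f.comp (inl ℝ X Y) = 0 := inlPartZero f x y hf1 hfxy hy.le hx
      set h : Y →L[ℝ] ℝ := f.comp (inr ℝ X Y) with hh
      have h0 : ∀ u : X, f (u, (0:Y)) = 0 := by
        intro u
        have := congrArg (fun F : X →L[ℝ] ℝ => F u) hz
        simpa using this
      have hhy : h y = 1 := by
        have hsplit : (((0:X), y) : X × Y) = (x, y) - (x, (0:Y)) := by
          simp [Prod.mk_sub_mk]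
        have : h y = f (x, y) - f (x, (0:Y)) := by
          rw [hh]; simp only [comp_apply, inr_apply]
          rw [hsplit, map_sub]
        rw [this, hfxy, h0 x, sub_zero]
      have hhn : ‖h‖ = 1 := by
        refine le_antisymm (hf1 ▸ normCompInrLe f) ?_
        have := h.unit_le_opNorm y hy.le
        simpa [hhy] using this
      have hhh : h = h₀ := hhuniq h ⟨hhn, hhy⟩
      refine ContinuousLinearMap.ext fun p => ?_
      have hsplit : (p : X × Y) = (p.1, (0:Y)) + ((0:X), p.2) := by
        simp [Prod.mk_add_mk]
      have hfp : f p = h p.2 := by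
        conv_lhs => rw [hsplit]
        rw [map_add, h0 p.1, zero_add]
        simp [hh]
      simp [hfp, hhh]
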